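/- Let (H,α) be a Hom-Hopf algebra, (B,β) a left H-module Hom-algebra, and (A,γ) a left H-comodule algebra with coaction a ↦ a₍₋₁₎⊗a₍₀₎. Then the multiplication (b⊗a)(b'⊗a') = b(α⁻²(a₍₋₁₎)·β⁻¹(b')) ⊗ γ⁻¹(a₍₀₎)a' makes (B⊗A, β⊗γ) into a Hom-associative algebra with unit 1⊗1 (denoted B⋉A). -/

import Mathlib

open scoped TensorProduct BigOperators

universe u v

/-- A Hom-Hopf algebra over a field `k`, with a chosen Sweedler-type
decomposition (`Idx`, `T`, `d1`, `d2`) of the comultiplication: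
`comul h = ∑ i ∈ T h, d1 h i ⊗ₜ d2 h i`.  The structure map `α` is assumed
bijective (a linear equivalence), as throughout the paper. -/
structure HomHopf (k : Type u) (H : Type v) [Field k] [AddCommGroup H] [Module k H] where
  mul : H →ₗ[k] H →ₗ[k] H
  one : H
  α : H ≃ₗ[k] H
  comul : H →ₗ[k] H ⊗[k] H
  counit : H →ₗ[k] k
  S : H →ₗ[k] H
  Idx : Type v
  T : H → Finset Idx
  d1 : H → Idx → H
  d2 : H → Idx → H
  repr : ∀ h, comul h = ∑ i ∈ T h, d1 h i ⊗ₜ[k] d2 h i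
  α_one : α one = one
  α_mul : ∀ x y, α (mul x y) = mul (α x) (α y)
  one_mul : ∀ x, mul one x = α x
  mul_one : ∀ x, mul x one = α x
  hom_assoc : ∀ x y z, mul (α x) (mul y z) = mul (mul x y) (α z)
  counit_α : ∀ h, counit (α h) = counit h
  comul_α : ∀ h, comul (α h) = ∑ i ∈ T h, α (d1 h i) ⊗ₜ[k] α (d2 h i)
  counit_left : ∀ h, ∑ i ∈ T h, counit (d1 h i) • d2 h i = α h
  counit_right : ∀ h, ∑ i ∈ T h, counit (d2 h i) • d1 h i = α h
  hom_coassoc : ∀ h,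
    (TensorProduct.assoc k H H H) (∑ i ∈ T h, comul (d1 h i) ⊗ₜ[k] α (d2 h i))
      = ∑ i ∈ T h, α (d1 h i) ⊗ₜ[k] comul (d2 h i)
  counit_one : counit one = 1
  counit_mul : ∀ x y, counit (mul x y) = counit x * counit y
  comul_one : comul one = one ⊗ₜ[k] one
  comul_mul : ∀ x y, comul (mul x y)
      = ∑ i ∈ T x, ∑ j ∈ T y, mul (d1 x i) (d1 y j) ⊗ₜ[k] mul (d2 x i) (d2 y j)
  S_α : ∀ h, S (α h) = α (S h)
  S_left : ∀ h, ∑ i ∈ T h, mul (S (d1 h i)) (d2 h i) = counit h • one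
  S_right : ∀ h, ∑ i ∈ T h, mul (d1 h i) (S (d2 h i)) = counit h • one

/-- A unital Hom-associative algebra with bijective structure map. -/
structure HomAlg (k : Type u) (A : Type v) [Field k] [AddCommGroup A] [Module k A] where
  mul : A →ₗ[k] A →ₗ[k] A
  one : A
  β : A ≃ₗ[k] A
  β_one : β one = one
  β_mul : ∀ x y, β (mul x y) = mul (β x) (β y)
  one_mul : ∀ x, mul one x = β x
  mul_one : ∀ x, mul x one = β x
  hom_assoc : ∀ x y z, mul (β x) (mul y z) = mul (mul x y) (β z)

section S18

variable (k : Type u) (H B A : Type v) [Field k]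
  [AddCommGroup H] [Module k H] [AddCommGroup B] [Module k B]
  [AddCommGroup A] [Module k A]

/-- A left `H`-module Hom-algebra `(B,β)`. -/
structure LModAlg (HH : HomHopf k H) where
  mul : B →ₗ[k] B →ₗ[k] B
  one : B
  β : B ≃ₗ[k] B
  β_one : β one = one
  β_mul : ∀ x y, β (mul x y) = mul (β x) (β y)
  one_mul : ∀ x, mul one x = β x
  mul_one : ∀ x, mul x one = β x
  hom_assoc : ∀ x y z, mul (β x) (mul y z) = mul (mul x y) (β z)
  act : H →ₗ[k] B →ₗ[k] B
  act_one : ∀ b, act HH.one b = β b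
  act_assoc : ∀ h h' b, act (HH.α h) (act h' b) = act (HH.mul h h') (β b)
  β_act : ∀ h b, β (act h b) = act (HH.α h) (β b)
  act_mul : ∀ h b b', act (HH.α (HH.α h)) (mul b b')
    = ∑ i ∈ HH.T h, mul (act (HH.d1 h i) b) (act (HH.d2 h i) b')
  act_unit : ∀ h, act h one = HH.counit h • one

/-- A left `H`-comodule algebra `(A,γ)`, with a chosen Sweedler decomposition
`ρ a = ∑ i ∈ Tc a, c1 a i ⊗ₜ c0 a i` of the coaction. -/
structure LComodAlg (HH : HomHopf k H) where
  mul : A →ₗ[k] A →ₗ[k] A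
  one : A
  γ : A ≃ₗ[k] A
  γ_one : γ one = one
  γ_mul : ∀ x y, γ (mul x y) = mul (γ x) (γ y)
  one_mul : ∀ x, mul one x = γ x
  mul_one : ∀ x, mul x one = γ x
  hom_assoc : ∀ x y z, mul (γ x) (mul y z) = mul (mul x y) (γ z)
  ρ : A →ₗ[k] H ⊗[k] A
  Kdx : Type v
  Tc : A → Finset Kdx
  c1 : A → Kdx → H
  c0 : A → Kdx → A
  reprρ : ∀ a, ρ a = ∑ i ∈ Tc a, c1 a i ⊗ₜ[k] c0 a i
  counit_ρ : ∀ a, ∑ i ∈ Tc a, HH.counit (c1 a i) • c0 a i = γ a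
  ρ_γ : ∀ a, ρ (γ a) = ∑ i ∈ Tc a, HH.α (c1 a i) ⊗ₜ[k] γ (c0 a i)
  ρ_coassoc : ∀ a, (TensorProduct.assoc k H H A)
      (∑ i ∈ Tc a, HH.comul (c1 a i) ⊗ₜ[k] γ (c0 a i))
    = ∑ i ∈ Tc a, HH.α (c1 a i) ⊗ₜ[k] ρ (c0 a i)
  ρ_mul : ∀ a a', ρ (mul a a')
    = ∑ i ∈ Tc a, ∑ j ∈ Tc a', HH.mul (c1 a i) (c1 a' j) ⊗ₜ[k] mul (c0 a i) (c0 a' j)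
  ρ_one : ρ one = HH.one ⊗ₜ[k] one

variable {k H B A}


section SmashAux

open TensorProduct LinearMap

variable (HH : HomHopf k H) (BB : LModAlg k H B HH) (AA : LComodAlg k H A HH)

/-- cancel `(e₁⁻¹ ⊗ e₂⁻¹) ∘ (e₁ ⊗ e₂)` on a tensor. -/
lemma smash_map_symm_cancel {M N : Type v} [AddCommGroup M] [Module k M]
    [AddCommGroup N] [Module k N]
    (e1 : M ≃ₗ[k] M) (e2 : N ≃ₗ[k] N) (t : M ⊗[k] N) :
    TensorProduct.map e1.symm.toLinearMap e2.symm.toLinearMap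
      (TensorProduct.map e1.toLinearMap e2.toLinearMap t) = t := by
  induction t using TensorProduct.induction_on with
  | zero => simp
  | tmul x y => simp
  | add x y hx hy => simp [map_add, hx, hy]

/-- The map `Φ b b' a'` with `Φ (h ⊗ v) = b(α⁻²(h)·β⁻¹(b')) ⊗ γ⁻¹(v)a'`. -/
noncomputable def smashPhi (b b' : B) (a' : A) : (H ⊗[k] A) →ₗ[k] B ⊗[k] A :=
  TensorProduct.map
    ((BB.mul b) ∘ₗ (BB.act.flip (BB.β.symm b')) ∘ₗ
      (HH.α.symm.toLinearMap ∘ₗ HH.α.symm.toLinearMap))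
    ((AA.mul.flip a') ∘ₗ AA.γ.symm.toLinearMap)

@[simp] lemma smashPhi_tmul (b b' : B) (a' : A) (h : H) (v : A) :
    smashPhi HH BB AA b b' a' (h ⊗ₜ[k] v)
      = BB.mul b (BB.act (HH.α.symm (HH.α.symm h)) (BB.β.symm b'))
          ⊗ₜ[k] AA.mul (AA.γ.symm v) a' := by
  simp [smashPhi]

/-- componentwise multiplication on `H ⊗ A` -/
noncomputable def smashMul2 : (H ⊗[k] A) →ₗ[k] (H ⊗[k] A) →ₗ[k] H ⊗[k] A :=
  TensorProduct.map₂ HH.mul AA.mul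

@[simp] lemma smashMul2_tmul (h g : H) (v w : A) :
    smashMul2 HH AA (h ⊗ₜ[k] v) (g ⊗ₜ[k] w) = HH.mul h g ⊗ₜ[k] AA.mul v w := by
  simp [smashMul2, TensorProduct.map₂_apply_tmul]

lemma smash_rho_gamma (a : A) :
    AA.ρ (AA.γ a)
      = TensorProduct.map HH.α.toLinearMap AA.γ.toLinearMap (AA.ρ a) := by
  rw [AA.ρ_γ, AA.reprρ a, map_sum]
  simp

lemma smash_rho_gamma_symm (a : A) :
    AA.ρ (AA.γ.symm a)
      = TensorProduct.map HH.α.symm.toLinearMap AA.γ.symm.toLinearMap (AA.ρ a) := by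
  have h1 : AA.ρ a
      = TensorProduct.map HH.α.toLinearMap AA.γ.toLinearMap (AA.ρ (AA.γ.symm a)) := by
    rw [← smash_rho_gamma HH AA (AA.γ.symm a), AA.γ.apply_symm_apply]
  rw [h1, smash_map_symm_cancel]

lemma smash_rho_mul (a a' : A) :
    AA.ρ (AA.mul a a') = smashMul2 HH AA (AA.ρ a) (AA.ρ a') := by
  rw [AA.ρ_mul, AA.reprρ a, AA.reprρ a']
  simp only [map_sum, LinearMap.sum_apply, smashMul2_tmul]
  rw [Finset.sum_comm]

lemma smash_rho_coassoc (a : A) :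
    (TensorProduct.assoc k H H A)
        (TensorProduct.map HH.comul AA.γ.toLinearMap (AA.ρ a))
      = TensorProduct.map HH.α.toLinearMap AA.ρ (AA.ρ a) := by
  have h1 := AA.ρ_coassoc a
  rw [AA.reprρ a, map_sum, map_sum]
  simpa using h1

lemma smash_comul_alpha (h : H) :
    HH.comul (HH.α h)
      = TensorProduct.map HH.α.toLinearMap HH.α.toLinearMap (HH.comul h) := by
  rw [HH.comul_α, HH.repr h, map_sum]
  simp

lemma smash_comul_alpha_symm (h : H) :
    HH.comul (HH.α.symm h)
      = TensorProduct.map HH.α.symm.toLinearMap HH.α.symm.toLinearMap (HH.comul h) := by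
  have h1 : HH.comul h
      = TensorProduct.map HH.α.toLinearMap HH.α.toLinearMap (HH.comul (HH.α.symm h)) := by
    rw [← smash_comul_alpha HH (HH.α.symm h), HH.α.apply_symm_apply]
  rw [h1, smash_map_symm_cancel]

/-- `AM x y (h ⊗ g) = (h·x)(g·y)` -/
noncomputable def smashAM (x y : B) : (H ⊗[k] H) →ₗ[k] B :=
  TensorProduct.lift (LinearMap.compl₂ (BB.mul ∘ₗ (BB.act.flip x)) (BB.act.flip y))

@[simp] lemma smashAM_tmul (x y : B) (h g : H) :
    smashAM HH BB x y (h ⊗ₜ[k] g) = BB.mul (BB.act h x) (BB.act g y) := by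
  simp [smashAM]

lemma smash_act_mul (h : H) (x y : B) :
    BB.act (HH.α (HH.α h)) (BB.mul x y) = smashAM HH BB x y (HH.comul h) := by
  rw [BB.act_mul, HH.repr h, map_sum]
  simp

-- elementwise inverse lemmas
lemma smash_alpha_symm_one : HH.α.symm HH.one = HH.one := by
  apply HH.α.injective; rw [HH.α.apply_symm_apply, HH.α_one]

lemma smash_alpha_symm_mul (x y : H) :
    HH.α.symm (HH.mul x y) = HH.mul (HH.α.symm x) (HH.α.symm y) := by
  apply HH.α.injective; rw [HH.α.apply_symm_apply, HH.α_mul]; simp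

lemma smash_counit_alpha_symm (h : H) : HH.counit (HH.α.symm h) = HH.counit h := by
  conv_rhs => rw [← HH.α.apply_symm_apply h, HH.counit_α]

lemma smash_beta_symm_one : BB.β.symm BB.one = BB.one := by
  apply BB.β.injective; rw [BB.β.apply_symm_apply, BB.β_one]

lemma smash_beta_symm_mul (x y : B) :
    BB.β.symm (BB.mul x y) = BB.mul (BB.β.symm x) (BB.β.symm y) := by
  apply BB.β.injective; rw [BB.β.apply_symm_apply, BB.β_mul]; simp

lemma smash_beta_symm_act (h : H) (x : B) :
    BB.β.symm (BB.act h x) = BB.act (HH.α.symm h) (BB.β.symm x) := by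
  apply BB.β.injective
  rw [BB.β.apply_symm_apply, BB.β_act]; simp

lemma smash_gamma_symm_one : AA.γ.symm AA.one = AA.one := by
  apply AA.γ.injective; rw [AA.γ.apply_symm_apply, AA.γ_one]

lemma smash_gamma_symm_mul (x y : A) :
    AA.γ.symm (AA.mul x y) = AA.mul (AA.γ.symm x) (AA.γ.symm y) := by
  apply AA.γ.injective; rw [AA.γ.apply_symm_apply, AA.γ_mul]; simp

end SmashAux

section SmashAux2

open TensorProduct LinearMap

variable (HH : HomHopf k H) (BB : LModAlg k H B HH) (AA : LComodAlg k H A HH)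

noncomputable def smashMu : B ⊗[k] (B ⊗[k] A) →ₗ[k] B ⊗[k] A :=
  (TensorProduct.map (TensorProduct.lift BB.mul) LinearMap.id) ∘ₗ
    (TensorProduct.assoc k B B A).symm.toLinearMap

@[simp] lemma smashMu_tmul (b₀ x : B) (y : A) :
    smashMu HH BB (b₀ ⊗ₜ[k] (x ⊗ₜ[k] y)) = BB.mul b₀ x ⊗ₜ[k] y := by
  simp [smashMu]

noncomputable def smashF (b'' : B) : H →ₗ[k] B :=
  BB.act.flip b'' ∘ₗ (HH.α.symm.toLinearMap ∘ₗ HH.α.symm.toLinearMap)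

noncomputable def smashG (a'' : A) : A →ₗ[k] A :=
  AA.mul.flip (AA.γ a'') ∘ₗ AA.γ.symm.toLinearMap

noncomputable def smashK (b'' : B) (a' a'' : A) : (H ⊗[k] A) →ₗ[k] B ⊗[k] A :=
  (TensorProduct.map (smashF HH BB b'') (smashG HH AA a'')) ∘ₗ
    ((smashMul2 HH AA).flip (AA.ρ a'))

noncomputable def smashfmap (b b' : B) : H →ₗ[k] B :=
  BB.mul b ∘ₗ BB.act.flip (BB.β.symm b') ∘ₗ
    (HH.α.symm.toLinearMap ∘ₗ HH.α.symm.toLinearMap ∘ₗ HH.α.symm.toLinearMap)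

@[simp] lemma smashfmap_apply (b b' : B) (h : H) :
    smashfmap HH BB b b' h
      = BB.mul b (BB.act (HH.α.symm (HH.α.symm (HH.α.symm h))) (BB.β.symm b')) := rfl

noncomputable def smashOmega (b b' b'' : B) (a' a'' : A) :
    H ⊗[k] (H ⊗[k] A) →ₗ[k] B ⊗[k] A :=
  smashMu HH BB ∘ₗ (TensorProduct.map LinearMap.id (smashK HH BB AA b'' a' a'')) ∘ₗ
    (TensorProduct.map (smashfmap HH BB b b')
      (TensorProduct.map HH.α.symm.toLinearMap AA.γ.symm.toLinearMap))

lemma smash_mu_phi (b₀ b'' : B) (a'' : A) (S : H ⊗[k] A) :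
    smashMu HH BB (b₀ ⊗ₜ[k] (TensorProduct.map (smashF HH BB b'') (smashG HH AA a'') S))
      = smashPhi HH BB AA b₀ (BB.β b'') (AA.γ a'') S := by
  induction S using TensorProduct.induction_on with
  | zero => simp
  | tmul h v => simp [smashF, smashG]
  | add x y hx hy => rw [map_add, tmul_add, map_add, map_add, hx, hy]

lemma smashOmega_apply (b b' b'' : B) (a' a'' : A) (h : H) (t : H ⊗[k] A) :
    smashOmega HH BB AA b b' b'' a' a'' (h ⊗ₜ[k] t)
      = smashPhi HH BB AA (smashfmap HH BB b b' h) (BB.β b'') (AA.γ a'')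
          (smashMul2 HH AA
            (TensorProduct.map HH.α.symm.toLinearMap AA.γ.symm.toLinearMap t)
            (AA.ρ a')) := by
  rw [smashOmega]
  simp only [coe_comp, Function.comp_apply, TensorProduct.map_tmul, LinearMap.id_coe, id_eq]
  rw [smashK]
  simp only [coe_comp, Function.comp_apply, LinearMap.flip_apply]
  exact smash_mu_phi HH BB AA _ b'' a'' _

/-- a common term for both sides of hom-associativity -/
noncomputable def smashE (b b' b'' : B) (a a' a'' : A)
    (i j : AA.Kdx) (p : HH.Idx) : B ⊗[k] A :=
  BB.mul
      (BB.mul b (BB.act (HH.α.symm (HH.α.symm (HH.α.symm (HH.d1 (AA.c1 a i) p))))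
        (BB.β.symm b')))
      (BB.act (HH.mul (HH.α.symm (HH.α.symm (HH.α.symm (HH.d2 (AA.c1 a i) p))))
        (HH.α.symm (HH.α.symm (AA.c1 a' j)))) b'')
    ⊗ₜ[k] AA.mul (AA.c0 a i) (AA.mul (AA.γ.symm (AA.c0 a' j)) a'')

end SmashAux2
/-- For a left `H`-module Hom-algebra `(B,β)` and a left `H`-comodule
algebra `(A,γ)`, the multiplication
`(b⊗a)(b'⊗a') = b(α⁻²(a₍₋₁₎)·β⁻¹(b')) ⊗ γ⁻¹(a₍₀₎)a'` makes `(B ⊗ A, β ⊗ γ)` into a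
Hom-associative algebra `B ⋉ A` with unit `1 ⊗ 1`. -/
theorem smash_BA_homAlgebra
    (HH : HomHopf k H) (BB : LModAlg k H B HH) (AA : LComodAlg k H A HH)
    (m : (B ⊗[k] A) →ₗ[k] (B ⊗[k] A) →ₗ[k] B ⊗[k] A)
    (hm : ∀ b a b' a', m (b ⊗ₜ[k] a) (b' ⊗ₜ[k] a')
      = ∑ i ∈ AA.Tc a,
          BB.mul b (BB.act (HH.α.symm (HH.α.symm (AA.c1 a i))) (BB.β.symm b'))
            ⊗ₜ[k] AA.mul (AA.γ.symm (AA.c0 a i)) a') :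
    (∀ x y z : B ⊗[k] A,
        m (TensorProduct.map BB.β.toLinearMap AA.γ.toLinearMap x) (m y z)
          = m (m x y) (TensorProduct.map BB.β.toLinearMap AA.γ.toLinearMap z)) ∧
    (∀ x : B ⊗[k] A, m (BB.one ⊗ₜ[k] AA.one) x
        = TensorProduct.map BB.β.toLinearMap AA.γ.toLinearMap x) ∧
    (∀ x : B ⊗[k] A, m x (BB.one ⊗ₜ[k] AA.one)
        = TensorProduct.map BB.β.toLinearMap AA.γ.toLinearMap x) ∧
    (∀ x y : B ⊗[k] A,
        TensorProduct.map BB.β.toLinearMap AA.γ.toLinearMap (m x y)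
          = m (TensorProduct.map BB.β.toLinearMap AA.γ.toLinearMap x)
              (TensorProduct.map BB.β.toLinearMap AA.γ.toLinearMap y)) := by
  classical
  have m_eq : ∀ (b : B) (a : A) (b' : B) (a' : A),
      m (b ⊗ₜ[k] a) (b' ⊗ₜ[k] a') = smashPhi HH BB AA b b' a' (AA.ρ a) := by
    intro b a b' a'
    rw [hm, AA.reprρ a, map_sum]
    simp
  refine ⟨?_, ?_, ?_, ?_⟩
  · -- associativity
    intro x y z
    induction x using TensorProduct.induction_on with
    | zero => simp
    | add x₁ x₂ h1 h2 => simp only [map_add, LinearMap.add_apply, h1, h2]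
    | tmul b a =>
      induction y using TensorProduct.induction_on with
      | zero => simp
      | add y₁ y₂ h1 h2 => simp only [map_add, LinearMap.add_apply, h1, h2]
      | tmul b' a' =>
        induction z using TensorProduct.induction_on with
        | zero => simp
        | add z₁ z₂ h1 h2 => simp only [map_add, LinearMap.add_apply, h1, h2]
        | tmul b'' a'' =>
          have key_second : ∀ (v w : A),
              AA.mul (AA.γ.symm (AA.mul v w)) (AA.γ a'')
                = AA.mul v (AA.mul (AA.γ.symm w) a'') := by
            intro v w
            rw [smash_gamma_symm_mul HH AA]
            have h := AA.hom_assoc (AA.γ.symm v) (AA.γ.symm w) a''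
            rw [AA.γ.apply_symm_apply] at h
            exact h.symm
          have lhs_eq : m (TensorProduct.map BB.β.toLinearMap AA.γ.toLinearMap (b ⊗ₜ[k] a))
                (m (b' ⊗ₜ[k] a') (b'' ⊗ₜ[k] a''))
              = ∑ j ∈ AA.Tc a', ∑ i ∈ AA.Tc a, ∑ p ∈ HH.T (AA.c1 a i),
                  smashE HH BB AA b b' b'' a a' a'' i j p := by
            rw [TensorProduct.map_tmul, m_eq b' a' b'' a'', AA.reprρ a', map_sum, map_sum]
            simp only [smashPhi_tmul, LinearEquiv.coe_coe]
            simp only [m_eq, smash_rho_gamma HH AA]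
            rw [AA.reprρ a]
            simp only [map_sum, TensorProduct.map_tmul, smashPhi_tmul, LinearEquiv.coe_coe,
              LinearEquiv.symm_apply_apply]
            refine Finset.sum_congr rfl fun j _ => Finset.sum_congr rfl fun i _ => ?_
            rw [smash_beta_symm_mul HH BB, smash_beta_symm_act HH BB]
            have e1 : HH.α.symm (AA.c1 a i)
                = HH.α (HH.α (HH.α.symm (HH.α.symm (HH.α.symm (AA.c1 a i))))) := by simp
            rw [e1, smash_act_mul HH BB, smash_comul_alpha_symm HH, smash_comul_alpha_symm HH,
              smash_comul_alpha_symm HH, HH.repr (AA.c1 a i)]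
            simp only [map_sum, TensorProduct.map_tmul, LinearEquiv.coe_coe, smashAM_tmul]
            rw [TensorProduct.sum_tmul]
            refine Finset.sum_congr rfl fun p _ => ?_
            rw [BB.hom_assoc, BB.β_act, BB.β_act, BB.act_assoc]
            simp [smashE]
          have rhs_eq : m (m (b ⊗ₜ[k] a) (b' ⊗ₜ[k] a'))
                (TensorProduct.map BB.β.toLinearMap AA.γ.toLinearMap (b'' ⊗ₜ[k] a''))
              = ∑ i ∈ AA.Tc a, ∑ p ∈ HH.T (AA.c1 a i), ∑ j ∈ AA.Tc a',
                  smashE HH BB AA b b' b'' a a' a'' i j p := by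
            rw [TensorProduct.map_tmul, m_eq b a b' a', AA.reprρ a, map_sum]
            simp only [smashPhi_tmul, LinearEquiv.coe_coe]
            rw [map_sum, LinearMap.sum_apply]
            simp only [m_eq, smash_rho_mul HH AA, smash_rho_gamma_symm HH AA]
            have stepO : ∀ i, smashPhi HH BB AA
                  (BB.mul b (BB.act (HH.α.symm (HH.α.symm (AA.c1 a i))) (BB.β.symm b')))
                  (BB.β b'') (AA.γ a'')
                  (smashMul2 HH AA
                    (TensorProduct.map HH.α.symm.toLinearMap AA.γ.symm.toLinearMap
                      (AA.ρ (AA.c0 a i))) (AA.ρ a'))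
                = smashOmega HH BB AA b b' b'' a' a''
                    (HH.α (AA.c1 a i) ⊗ₜ[k] AA.ρ (AA.c0 a i)) := by
              intro i
              rw [smashOmega_apply]
              simp
            simp only [stepO]
            rw [← map_sum]
            have eq1 : ∑ i ∈ AA.Tc a, HH.α (AA.c1 a i) ⊗ₜ[k] AA.ρ (AA.c0 a i)
                = TensorProduct.map HH.α.toLinearMap AA.ρ (AA.ρ a) := by
              rw [AA.reprρ a, map_sum]; simp
            rw [eq1, ← smash_rho_coassoc HH AA, AA.reprρ a, map_sum, map_sum, map_sum]
            simp only [TensorProduct.map_tmul, LinearEquiv.coe_coe]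
            refine Finset.sum_congr rfl fun i _ => ?_
            rw [HH.repr (AA.c1 a i), TensorProduct.sum_tmul, map_sum, map_sum]
            simp only [TensorProduct.assoc_tmul]
            refine Finset.sum_congr rfl fun p _ => ?_
            rw [smashOmega_apply, TensorProduct.map_tmul]
            simp only [LinearEquiv.coe_coe, LinearEquiv.symm_apply_apply]
            rw [AA.reprρ a', map_sum, map_sum]
            simp only [smashMul2_tmul, smashPhi_tmul, smashfmap_apply,
              LinearEquiv.symm_apply_apply]
            refine Finset.sum_congr rfl fun j _ => ?_
            rw [smash_alpha_symm_mul HH, smash_alpha_symm_mul HH, key_second]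
            simp [smashE]
          rw [lhs_eq, rhs_eq, Finset.sum_comm]
          exact Finset.sum_congr rfl fun i _ => Finset.sum_comm

  · -- left unit
    intro x
    induction x using TensorProduct.induction_on with
    | zero => simp
    | tmul b a =>
      rw [m_eq, AA.ρ_one]
      simp [smash_alpha_symm_one HH, BB.act_one, BB.one_mul,
        smash_gamma_symm_one HH AA, AA.one_mul]
    | add x y hx hy => rw [map_add, map_add, hx, hy]
  · -- right unit
    intro x
    induction x using TensorProduct.induction_on with
    | zero => simp
    | tmul b a =>
      rw [m_eq, AA.reprρ a, map_sum]
      have hterm : ∀ i ∈ AA.Tc a,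
          smashPhi HH BB AA b BB.one AA.one (AA.c1 a i ⊗ₜ[k] AA.c0 a i)
            = BB.β b ⊗ₜ[k] (HH.counit (AA.c1 a i) • AA.c0 a i) := by
        intro i _
        rw [smashPhi_tmul, smash_beta_symm_one HH BB, BB.act_unit,
          smash_counit_alpha_symm, smash_counit_alpha_symm, AA.mul_one,
          LinearEquiv.apply_symm_apply, map_smul, BB.mul_one, TensorProduct.smul_tmul]
      rw [Finset.sum_congr rfl hterm, ← TensorProduct.tmul_sum, AA.counit_ρ]
      simp
    | add x y hx hy => simp only [map_add, LinearMap.add_apply, hx, hy]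
  · -- multiplicativity of β ⊗ γ
    intro x y
    induction x using TensorProduct.induction_on with
    | zero => simp
    | tmul b a =>
      induction y using TensorProduct.induction_on with
      | zero => simp
      | tmul b' a' =>
        rw [m_eq, TensorProduct.map_tmul, TensorProduct.map_tmul]
        simp only [LinearEquiv.coe_coe]
        rw [m_eq, smash_rho_gamma HH AA, AA.reprρ a]
        simp only [map_sum, smashPhi_tmul, TensorProduct.map_tmul,
          LinearEquiv.coe_coe, LinearEquiv.symm_apply_apply,
          LinearEquiv.apply_symm_apply]
        refine Finset.sum_congr rfl fun i _ => ?_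
        rw [BB.β_mul, BB.β_act, AA.γ_mul]
        simp
      | add y z hy hz =>
        simp only [map_add, LinearMap.add_apply, hy, hz]
    | add x z hx hz =>
      simp only [map_add, LinearMap.add_apply, hx, hz]

end S18
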